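/- Let α > 1 and let A and M be finite-valued Young functions, with M differentiable on (0,∞) and satisfying d/dt (M(t)/t) > 0 for all t > 0. Fix λ > 0 and let Φ_λ(s) = s A⁻¹(Ψ_λ(s)), with generalized right-continuous inverse Φ_λ⁻¹(τ) = inf{ s > 0 : Φ_λ(s) > τ }. Then the following are equivalent: (a) there exists δ > 0 with ∫₀^δ s^{−1/α′} A⁻¹(Ψ_λ(s)) ds < ∞; (b) there exists δ′ > 0 with ∫₀^{δ′} Φ_λ⁻¹(τ)^{−1/α′} dτ < ∞. -/

import Mathlib

open MeasureTheory Set Filter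
open scoped ENNReal

/-- A finite-valued Young function: convex, vanishing at `0`, nonnegative on `[0,∞)`,
and not identically zero there. -/
structure IsYoung (A : ℝ → ℝ) : Prop where
  zero : A 0 = 0
  nonneg : ∀ t, 0 ≤ t → 0 ≤ A t
  convex : ConvexOn ℝ (Set.Ici 0) A
  nontrivial : ∃ t, 0 < t ∧ 0 < A t

/-- The Young conjugate `Ã(x) = sup { x t − A(t) : t ≥ 0 }`, with values in `[0,∞]`. -/
noncomputable def conjE (A : ℝ → ℝ) (x : ℝ≥0∞) : ℝ≥0∞ :=
  ⨆ t : {t : ℝ // 0 ≤ t}, (x * ENNReal.ofReal t.1 - ENNReal.ofReal (A t.1))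

/-- The generalized right-continuous inverse `F⁻¹(t) = inf { s ≥ 0 : F(s) > t }`. -/
noncomputable def rcInv (F : ℝ → ℝ) (t : ℝ) : ℝ :=
  sInf {s : ℝ | 0 ≤ s ∧ t < F s}

/-- The generalized right-continuous inverse of a Young function, acting on `[0,∞]`:
`A⁻¹(t) = inf { x ≥ 0 : A(x) > t }` (with `inf ∅ = ∞`). -/
noncomputable def einv (A : ℝ → ℝ) (t : ℝ≥0∞) : ℝ≥0∞ :=
  sInf {x : ℝ≥0∞ | t < ENNReal.ofReal (A x.toReal)}

/-- `Ψ_λ(s) = (1/s) [ ∫₀^s Ã(λ r^{1/α} M⁻¹(1/r)) dr + ∫_s^∞ Ã(λ r^{−1/α′} s M⁻¹(1/s)) dr ]`. -/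
noncomputable def Psi (A M : ℝ → ℝ) (a lam s : ℝ) : ℝ≥0∞ :=
  (ENNReal.ofReal s)⁻¹ *
    ((∫⁻ r in Set.Ioc 0 s, conjE A (ENNReal.ofReal (lam * r ^ (1/a) * rcInv M (1/r)))) +
     (∫⁻ r in Set.Ioi s, conjE A (ENNReal.ofReal (lam * r ^ (-((a-1)/a)) * s * rcInv M (1/s)))))

/-- `Φ_λ(s) = s A⁻¹(Ψ_λ(s))`. -/
noncomputable def Phi (A M : ℝ → ℝ) (a lam s : ℝ) : ℝ≥0∞ :=
  ENNReal.ofReal s * einv A (Psi A M a lam s)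

/-- Condition (M): for every `λ > 0` there is `δ > 0` with
`∫₀^δ s^{−1/α′} A⁻¹(Ψ_λ(s)) ds < ∞`. -/
def CondM (A M : ℝ → ℝ) (a : ℝ) : Prop :=
  ∀ lam > (0:ℝ), ∃ δ > (0:ℝ),
    (∫⁻ s in Set.Ioc (0:ℝ) δ,
      ENNReal.ofReal (s ^ (-((a-1)/a))) * einv A (Psi A M a lam s)) < ⊤

/-- The generalized right-continuous inverse `Φ⁻¹(τ) = inf { s > 0 : Φ(s) > τ }` of an
`[0,∞]`-valued function on `(0,∞)`, with values in `[0,∞]` (`inf ∅ = ∞`). -/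
noncomputable def invE (Φ : ℝ → ℝ≥0∞) (τ : ℝ) : ℝ≥0∞ :=
  sInf {x : ℝ≥0∞ | ∃ s : ℝ, 0 < s ∧ x = ENNReal.ofReal s ∧ ENNReal.ofReal τ < Φ s}

section AuxLemmas

variable {A M : ℝ → ℝ}

lemma IsYoung.mono' (hM : IsYoung M) {x y : ℝ} (hx : 0 ≤ x) (hxy : x ≤ y) : M x ≤ M y := by
  rcases eq_or_lt_of_le (hx.trans hxy) with hy | hy
  · have hx0 : x = 0 := le_antisymm (hxy.trans hy.symm.le) hx
    rw [hx0, ← hy]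
  · have hd1 : (0:ℝ) ≤ x / y := by positivity
    have hd2 : (0:ℝ) ≤ 1 - x / y := by
      have : x / y ≤ 1 := div_le_one_of_le₀ hxy hy.le
      linarith
    have hd3 : x / y + (1 - x / y) = 1 := by ring
    have h1 := hM.convex.2 (mem_Ici.2 (hx.trans hxy)) (mem_Ici.2 (le_refl (0:ℝ))) hd1 hd2 hd3
    have h2 : (x / y) • y + (1 - x / y) • (0:ℝ) = x := by
      field_simp
      rw [smul_eq_mul, smul_eq_mul, mul_zero, add_zero, div_mul_cancel₀ x hy.ne']
    rw [h2] at h1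
    have h3 : M x ≤ (x / y) * M y := by
      simpa [hM.zero, smul_eq_mul] using h1
    have h4 : (x / y) * M y ≤ 1 * M y := by
      apply mul_le_mul_of_nonneg_right _ (hM.nonneg y (hx.trans hxy))
      exact div_le_one_of_le₀ hxy hy.le
    linarith

lemma IsYoung.superadd (hA : IsYoung A) {k x : ℝ} (hk : 1 ≤ k) (hx : 0 ≤ x) :
    k * A x ≤ A (k * x) := by
  rcases eq_or_lt_of_le hk with hk1 | hk1
  · rw [← hk1, one_mul, one_mul]
  have hk0 : 0 < k := lt_trans one_pos hk1
  have hd1 : (0:ℝ) ≤ 1 / k := by positivity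
  have hd2 : (0:ℝ) ≤ 1 - 1 / k := by
    have : 1 / k ≤ 1 := by rw [div_le_one hk0]; exact hk
    linarith
  have hd3 : 1 / k + (1 - 1 / k) = 1 := by ring
  have h1 := hA.convex.2 (mem_Ici.2 (by positivity : (0:ℝ) ≤ k * x)) (mem_Ici.2 (le_refl (0:ℝ))) hd1 hd2 hd3
  have h2 : (1 / k) • (k * x) + (1 - 1 / k) • (0:ℝ) = x := by
    field_simp
    rw [smul_eq_mul, smul_eq_mul, mul_zero, add_zero]
    field_simp
  rw [h2] at h1
  have h3 : A x ≤ (1 / k) * A (k * x) := by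
    simpa [hA.zero, smul_eq_mul] using h1
  calc k * A x ≤ k * ((1 / k) * A (k * x)) := by
        apply mul_le_mul_of_nonneg_left h3 hk0.le
    _ = A (k * x) := by field_simp

lemma IsYoung.unbounded (hM : IsYoung M) (y : ℝ) : ∃ t, 0 ≤ t ∧ y < M t := by
  obtain ⟨t₀, ht₀, hMt₀⟩ := hM.nontrivial
  set k : ℝ := max 1 ((y + 1) / M t₀) with hk
  have hk1 : 1 ≤ k := le_max_left _ _
  refine ⟨k * t₀, by positivity, ?_⟩
  have h1 : k * M t₀ ≤ M (k * t₀) := hM.superadd hk1 ht₀.le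
  have h2 : (y + 1) / M t₀ ≤ k := le_max_right _ _
  have h3 : y + 1 ≤ k * M t₀ := by
    rw [div_le_iff₀ hMt₀] at h2; linarith
  linarith

lemma rcInv_nonneg (F : ℝ → ℝ) (t : ℝ) : 0 ≤ rcInv F t :=
  Real.sInf_nonneg fun _ hx => hx.1

lemma sT_mono (hM : IsYoung M) {u r : ℝ} (hu : 0 < u) (hur : u ≤ r) :
    u * rcInv M (1 / u) ≤ r * rcInv M (1 / r) := by
  have hr : 0 < r := hu.trans_le hur
  set k : ℝ := r / u with hkdef
  have hk0 : 0 < k := by positivity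
  have hk1 : 1 ≤ k := (one_le_div hu).2 hur
  have hne : {t : ℝ | 0 ≤ t ∧ 1 / r < M t}.Nonempty := by
    obtain ⟨t, ht0, hty⟩ := hM.unbounded (1 / r)
    exact ⟨t, ht0, hty⟩
  have key : rcInv M (1 / u) / k ≤ rcInv M (1 / r) := by
    refine le_csInf hne fun t ht => ?_
    rw [div_le_iff₀ hk0]
    have hmem : k * t ∈ {s : ℝ | 0 ≤ s ∧ 1 / u < M s} := by
      constructor
      · exact mul_nonneg hk0.le ht.1
      · have h1 : k * M t ≤ M (k * t) := hM.superadd hk1 ht.1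
        have h2 : k * (1 / r) < k * M t := by
          apply mul_lt_mul_of_pos_left ht.2 hk0
        have h3 : k * (1 / r) = 1 / u := by
          rw [hkdef]; field_simp; try ring
        linarith
    have h4 : rcInv M (1 / u) ≤ k * t := csInf_le ⟨0, fun z hz => hz.1⟩ hmem
    linarith [mul_comm k t]
  have h5 : rcInv M (1 / u) ≤ k * rcInv M (1 / r) := by
    rw [div_le_iff₀ hk0] at key
    linarith [mul_comm (rcInv M (1 / r)) k]
  calc u * rcInv M (1 / u) ≤ u * (k * rcInv M (1 / r)) :=
        mul_le_mul_of_nonneg_left h5 hu.le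
    _ = r * rcInv M (1 / r) := by rw [hkdef]; field_simp; try ring

lemma conjE_mono (A : ℝ → ℝ) {x y : ℝ≥0∞} (h : x ≤ y) : conjE A x ≤ conjE A y :=
  iSup_mono fun t => tsub_le_tsub (mul_le_mul_left h _) le_rfl

lemma einv_mono (A : ℝ → ℝ) {x y : ℝ≥0∞} (h : x ≤ y) : einv A x ≤ einv A y :=
  sInf_le_sInf fun z hz => lt_of_le_of_lt h hz

lemma einv_homog (hA : IsYoung A) {k : ℝ} (hk : 1 ≤ k) (u : ℝ≥0∞) :
    einv A (ENNReal.ofReal k * u) ≤ ENNReal.ofReal k * einv A u := by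
  have hk0 : (0:ℝ) < k := lt_of_lt_of_le one_pos hk
  have hkE0 : ENNReal.ofReal k ≠ 0 := by
    simp [ENNReal.ofReal_eq_zero, not_le, hk0]
  have hkEt : ENNReal.ofReal k ≠ ⊤ := ENNReal.ofReal_ne_top
  have h1 : einv A (ENNReal.ofReal k * u) / ENNReal.ofReal k ≤ einv A u := by
    refine le_sInf fun x hx => ?_
    rw [ENNReal.div_le_iff_le_mul (Or.inl hkE0) (Or.inl hkEt)]
    rcases eq_or_ne x ⊤ with rfl | hxt
    · rw [ENNReal.top_mul hkE0]; exact le_top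
    · refine sInf_le ?_
      have hxr : (ENNReal.ofReal k * x).toReal = k * x.toReal := by
        rw [ENNReal.toReal_mul, ENNReal.toReal_ofReal hk0.le]
      have h2 : k * A x.toReal ≤ A (k * x.toReal) :=
        hA.superadd hk ENNReal.toReal_nonneg
      have hlt : ENNReal.ofReal k * u < ENNReal.ofReal (A ((ENNReal.ofReal k * x).toReal)) := by
        calc ENNReal.ofReal k * u < ENNReal.ofReal k * ENNReal.ofReal (A x.toReal) :=
              (ENNReal.mul_lt_mul_iff_right hkE0 hkEt).2 hx
          _ = ENNReal.ofReal (k * A x.toReal) := (ENNReal.ofReal_mul hk0.le).symm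
          _ ≤ ENNReal.ofReal (A (k * x.toReal)) := ENNReal.ofReal_le_ofReal h2
          _ = _ := by rw [hxr]
      show ENNReal.ofReal k * u < ENNReal.ofReal (A ((x * ENNReal.ofReal k).toReal))
      rw [mul_comm x]
      exact hlt
  calc einv A (ENNReal.ofReal k * u)
      = einv A (ENNReal.ofReal k * u) / ENNReal.ofReal k * ENNReal.ofReal k :=
        (ENNReal.div_mul_cancel hkE0 hkEt).symm
    _ ≤ einv A u * ENNReal.ofReal k := mul_le_mul_left h1 _
    _ = ENNReal.ofReal k * einv A u := mul_comm _ _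







lemma invE_mono (Φ : ℝ → ℝ≥0∞) : Monotone (invE Φ) := by
  intro τ₁ τ₂ h
  apply sInf_le_sInf
  rintro x ⟨s, hs, rfl, hlt⟩
  exact ⟨s, hs, rfl, lt_of_le_of_lt (ENNReal.ofReal_le_ofReal h) hlt⟩

lemma invE_le {Φ : ℝ → ℝ≥0∞} {τ s : ℝ} (hs : 0 < s) (h : ENNReal.ofReal τ < Φ s) :
    invE Φ τ ≤ ENNReal.ofReal s :=
  sInf_le ⟨s, hs, rfl, h⟩

lemma lt_of_invE_lt {Φ : ℝ → ℝ≥0∞} (hmono : Monotone Φ) {τ s : ℝ}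
    (h : invE Φ τ < ENNReal.ofReal s) : ENNReal.ofReal τ < Φ s := by
  obtain ⟨x, hx, hxs⟩ := sInf_lt_iff.1 h
  obtain ⟨s', hs', rfl, hlt⟩ := hx
  have hss : s' ≤ s := by
    by_contra hcon
    push_neg at hcon
    exact absurd (ENNReal.ofReal_le_ofReal hcon.le) (not_le.2 hxs)
  exact lt_of_lt_of_le hlt (hmono hss)

lemma lintegral_Ioi_rpow_eval {c v : ℝ} (hc : 0 < c) (hv : 0 < v) :
    (∫⁻ s in Set.Ioi v, ENNReal.ofReal (s ^ (-1 - c))) = ENNReal.ofReal (v ^ (-c) / c) := by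
  have hlt : (-1 - c) < -1 := by linarith
  have hint := integrableOn_Ioi_rpow_of_lt hlt hv
  have hnn : 0 ≤ᵐ[volume.restrict (Set.Ioi v)] fun s : ℝ => s ^ (-1 - c) := by
    filter_upwards [ae_restrict_mem measurableSet_Ioi] with x hx
    exact Real.rpow_nonneg (le_of_lt (hv.trans hx)) _
  rw [← MeasureTheory.ofReal_integral_eq_lintegral_ofReal hint hnn,
    integral_Ioi_rpow_of_lt hlt hv]
  congr 1
  rw [show (-1 - c) + 1 = -c by ring]
  field_simp

lemma lintegral_Ioi_zero_rpow_top {c : ℝ} (hc : 0 < c) :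
    (∫⁻ s in Set.Ioi (0:ℝ), ENNReal.ofReal (s ^ (-1 - c))) = ⊤ := by
  refine ENNReal.eq_top_of_forall_nnreal_le fun R => ?_
  set v : ℝ := (c * R + 1) ^ (-(1/c) : ℝ) with hvdef
  have hb : (0:ℝ) < c * R + 1 := by positivity
  have hv : 0 < v := Real.rpow_pos_of_pos hb _
  have hvc : v ^ (-c) = c * R + 1 := by
    rw [hvdef, ← Real.rpow_mul hb.le]
    rw [show -(1/c) * -c = 1 by field_simp, Real.rpow_one]
  have h1 : (R:ℝ) ≤ v ^ (-c) / c := by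
    rw [hvc]
    rw [le_div_iff₀ hc]
    nlinarith [hc.le]
  calc (R : ℝ≥0∞) = ENNReal.ofReal (R:ℝ) := (ENNReal.ofReal_coe_nnreal (p := R)).symm
    _ ≤ ENNReal.ofReal (v ^ (-c) / c) := ENNReal.ofReal_le_ofReal h1
    _ = ∫⁻ s in Set.Ioi v, ENNReal.ofReal (s ^ (-1 - c)) := (lintegral_Ioi_rpow_eval hc hv).symm
    _ ≤ _ := lintegral_mono_set (Set.Ioi_subset_Ioi hv.le)

lemma layer_measure (x : ℝ≥0∞) :
    volume {τ : ℝ | 0 < τ ∧ ENNReal.ofReal τ < x} = x := by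
  rcases eq_or_ne x ⊤ with rfl | hx
  · have h : {τ : ℝ | 0 < τ ∧ ENNReal.ofReal τ < ⊤} = Set.Ioi 0 := by
      ext τ; simp [ENNReal.ofReal_lt_top, Set.mem_Ioi]
    rw [h, Real.volume_Ioi]
  · have h : {τ : ℝ | 0 < τ ∧ ENNReal.ofReal τ < x} = Set.Ioo 0 x.toReal := by
      ext τ
      simp only [Set.mem_setOf_eq, Set.mem_Ioo]
      constructor
      · rintro ⟨h1, h2⟩
        exact ⟨h1, (ENNReal.ofReal_lt_iff_lt_toReal h1.le hx).1 h2⟩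
      · rintro ⟨h1, h2⟩
        exact ⟨h1, (ENNReal.ofReal_lt_iff_lt_toReal h1.le hx).2 h2⟩
    rw [h, Real.volume_Ioo, sub_zero, ENNReal.ofReal_toReal hx]

lemma phi_monotone {a lam : ℝ} (ha : 1 < a) (hA : IsYoung A) (hM : IsYoung M)
    (hlam : 0 < lam) : Monotone (Phi A M a lam) := by
  have ha0 : a ≠ 0 := by positivity
  intro s₁ s₂ hle
  rcases le_or_gt s₁ 0 with hs1 | hs1
  · unfold Phi
    rw [ENNReal.ofReal_eq_zero.2 hs1, zero_mul]
    exact zero_le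
  have hs2 : 0 < s₂ := hs1.trans_le hle
  -- notation
  set f : ℝ → ℝ≥0∞ := fun r => conjE A (ENNReal.ofReal (lam * r ^ (1/a) * rcInv M (1/r)))
    with hf
  set g : ℝ → ℝ → ℝ≥0∞ :=
    fun s r => conjE A (ENNReal.ofReal (lam * r ^ (-((a-1)/a)) * s * rcInv M (1/s))) with hg
  -- monotonicity of the bracketed quantity
  have hHmono : (∫⁻ r in Set.Ioc 0 s₁, f r) + (∫⁻ r in Set.Ioi s₁, g s₁ r)
      ≤ (∫⁻ r in Set.Ioc 0 s₂, f r) + (∫⁻ r in Set.Ioi s₂, g s₂ r) := by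
    have hsplit1 : (∫⁻ r in Set.Ioc 0 s₂, f r)
        = (∫⁻ r in Set.Ioc 0 s₁, f r) + (∫⁻ r in Set.Ioc s₁ s₂, f r) := by
      rw [← lintegral_union measurableSet_Ioc (Set.Ioc_disjoint_Ioc_of_le le_rfl),
        Set.Ioc_union_Ioc_eq_Ioc hs1.le hle]
    have hsplit2 : (∫⁻ r in Set.Ioi s₁, g s₁ r)
        = (∫⁻ r in Set.Ioc s₁ s₂, g s₁ r) + (∫⁻ r in Set.Ioi s₂, g s₁ r) := by
      rw [← lintegral_union measurableSet_Ioi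
        (by simp [Set.disjoint_left, Set.mem_Ioc, Set.mem_Ioi]),
        Set.Ioc_union_Ioi_eq_Ioi hle]
    have hmid : (∫⁻ r in Set.Ioc s₁ s₂, g s₁ r) ≤ ∫⁻ r in Set.Ioc s₁ s₂, f r := by
      apply lintegral_mono_ae
      rw [ae_restrict_iff' measurableSet_Ioc]
      refine ae_of_all _ fun r hr => ?_
      have hr0 : 0 < r := hs1.trans hr.1
      have hT1 : s₁ * rcInv M (1/s₁) ≤ r * rcInv M (1/r) := sT_mono hM hs1 hr.1.le
      have hrc : 0 < r ^ (-((a-1)/a)) := Real.rpow_pos_of_pos hr0 _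
      have hpow : r ^ ((1:ℝ)/a) = r ^ (-((a-1)/a)) * r := by
        rw [show (1:ℝ)/a = -((a-1)/a) + 1 by field_simp; ring,
          Real.rpow_add hr0, Real.rpow_one]
      have harg : lam * r ^ (-((a-1)/a)) * s₁ * rcInv M (1/s₁)
          ≤ lam * r ^ ((1:ℝ)/a) * rcInv M (1/r) := by
        calc lam * r ^ (-((a-1)/a)) * s₁ * rcInv M (1/s₁)
            = (lam * r ^ (-((a-1)/a))) * (s₁ * rcInv M (1/s₁)) := by ring
          _ ≤ (lam * r ^ (-((a-1)/a))) * (r * rcInv M (1/r)) := by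
              apply mul_le_mul_of_nonneg_left hT1 (by positivity)
          _ = lam * (r ^ (-((a-1)/a)) * r) * rcInv M (1/r) := by ring
          _ = lam * r ^ ((1:ℝ)/a) * rcInv M (1/r) := by rw [← hpow]
      exact conjE_mono A (ENNReal.ofReal_le_ofReal harg)
    have htail : (∫⁻ r in Set.Ioi s₂, g s₁ r) ≤ ∫⁻ r in Set.Ioi s₂, g s₂ r := by
      apply lintegral_mono_ae
      rw [ae_restrict_iff' measurableSet_Ioi]
      refine ae_of_all _ fun r hr => ?_
      have hr0 : 0 < r := hs2.trans hr
      have hT1 : s₁ * rcInv M (1/s₁) ≤ s₂ * rcInv M (1/s₂) := sT_mono hM hs1 hle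
      have harg : lam * r ^ (-((a-1)/a)) * s₁ * rcInv M (1/s₁)
          ≤ lam * r ^ (-((a-1)/a)) * s₂ * rcInv M (1/s₂) := by
        have h1 : (lam * r ^ (-((a-1)/a))) * (s₁ * rcInv M (1/s₁))
            ≤ (lam * r ^ (-((a-1)/a))) * (s₂ * rcInv M (1/s₂)) := by
          apply mul_le_mul_of_nonneg_left hT1
          have : 0 < r ^ (-((a-1)/a)) := Real.rpow_pos_of_pos hr0 _
          positivity
        calc lam * r ^ (-((a-1)/a)) * s₁ * rcInv M (1/s₁)
            = (lam * r ^ (-((a-1)/a))) * (s₁ * rcInv M (1/s₁)) := by ring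
          _ ≤ (lam * r ^ (-((a-1)/a))) * (s₂ * rcInv M (1/s₂)) := h1
          _ = lam * r ^ (-((a-1)/a)) * s₂ * rcInv M (1/s₂) := by ring
      exact conjE_mono A (ENNReal.ofReal_le_ofReal harg)
    calc (∫⁻ r in Set.Ioc 0 s₁, f r) + (∫⁻ r in Set.Ioi s₁, g s₁ r)
        = (∫⁻ r in Set.Ioc 0 s₁, f r) + ((∫⁻ r in Set.Ioc s₁ s₂, g s₁ r)
            + (∫⁻ r in Set.Ioi s₂, g s₁ r)) := by rw [hsplit2]
      _ ≤ (∫⁻ r in Set.Ioc 0 s₁, f r) + ((∫⁻ r in Set.Ioc s₁ s₂, f r)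
            + (∫⁻ r in Set.Ioi s₂, g s₂ r)) := by
          exact add_le_add le_rfl (add_le_add hmid htail)
      _ = (∫⁻ r in Set.Ioc 0 s₂, f r) + (∫⁻ r in Set.Ioi s₂, g s₂ r) := by
          rw [hsplit1]; ring
  -- compare Psi
  have hk1 : 1 ≤ s₂ / s₁ := (one_le_div hs1).2 hle
  have hPsi : Psi A M a lam s₁ ≤ ENNReal.ofReal (s₂/s₁) * Psi A M a lam s₂ := by
    have e1 : ENNReal.ofReal (s₂/s₁) * Psi A M a lam s₂
        = (ENNReal.ofReal s₁)⁻¹ *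
          ((∫⁻ r in Set.Ioc 0 s₂, f r) + (∫⁻ r in Set.Ioi s₂, g s₂ r)) := by
      unfold Psi
      rw [ENNReal.ofReal_div_of_pos hs1, div_eq_mul_inv, ← mul_assoc]
      congr 1
      rw [mul_comm (ENNReal.ofReal s₂) (ENNReal.ofReal s₁)⁻¹, mul_assoc,
        ENNReal.mul_inv_cancel (by simp [hs2] : ENNReal.ofReal s₂ ≠ 0) ENNReal.ofReal_ne_top,
        mul_one]
    rw [e1]
    unfold Psi
    exact mul_le_mul_right hHmono _
  calc Phi A M a lam s₁ = ENNReal.ofReal s₁ * einv A (Psi A M a lam s₁) := rfl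
    _ ≤ ENNReal.ofReal s₁ * einv A (ENNReal.ofReal (s₂/s₁) * Psi A M a lam s₂) :=
        mul_le_mul_right (einv_mono A hPsi) _
    _ ≤ ENNReal.ofReal s₁ * (ENNReal.ofReal (s₂/s₁) * einv A (Psi A M a lam s₂)) :=
        mul_le_mul_right (einv_homog hA hk1 _) _
    _ = (ENNReal.ofReal s₁ * ENNReal.ofReal (s₂/s₁)) * einv A (Psi A M a lam s₂) :=
        (mul_assoc _ _ _).symm
    _ = ENNReal.ofReal (s₁ * (s₂/s₁)) * einv A (Psi A M a lam s₂) := by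
        rw [ENNReal.ofReal_mul hs1.le]
    _ = Phi A M a lam s₂ := by
        rw [show s₁ * (s₂/s₁) = s₂ by field_simp]
        rfl

end AuxLemmas

theorem condM_iff_inv_integrable
    (a : ℝ) (ha : 1 < a) (A M : ℝ → ℝ) (hA : IsYoung A) (hM : IsYoung M)
    (hMdiff : ∀ t > (0:ℝ), DifferentiableAt ℝ M t)
    (hMratio : ∀ t > (0:ℝ), 0 < deriv (fun u => M u / u) t)
    (lam : ℝ) (hlam : 0 < lam) :
    (∃ δ > (0:ℝ),
      (∫⁻ s in Set.Ioc (0:ℝ) δ,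
        ENNReal.ofReal (s ^ (-((a-1)/a))) * einv A (Psi A M a lam s)) < ⊤) ↔
    (∃ δ' > (0:ℝ),
      (∫⁻ τ in Set.Ioc (0:ℝ) δ',
        (invE (Phi A M a lam) τ) ^ (-((a-1)/a))) < ⊤) := by
  set c : ℝ := (a-1)/a with hcdef
  have hc : 0 < c := div_pos (by linarith) (by linarith)
  set Φf : ℝ → ℝ≥0∞ := Phi A M a lam with hPhidef
  have hΦmono : Monotone Φf := phi_monotone ha hA hM hlam
  have hΦmeas : Measurable Φf := hΦmono.measurable
  have hcne : ENNReal.ofReal c ≠ 0 := by simp [hc, not_le]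
  -- rewrite of the (a)-side integrand
  have hrpow : ∀ s : ℝ, 0 < s → s ^ (-1-c) * s = s ^ (-c) := by
    intro s hs
    have h1 := (Real.rpow_add hs (-1-c) 1).symm
    rw [Real.rpow_one, show (-1-c) + 1 = -c by ring] at h1
    exact h1
  have hintegrand : ∀ δ : ℝ,
      (∫⁻ s in Set.Ioc (0:ℝ) δ, ENNReal.ofReal (s ^ (-c)) * einv A (Psi A M a lam s))
      = ∫⁻ s in Set.Ioc (0:ℝ) δ, ENNReal.ofReal (s ^ (-1-c)) * Φf s := by
    intro δ
    refine setLIntegral_congr_fun measurableSet_Ioc (fun s hs => ?_)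
    show ENNReal.ofReal (s ^ (-c)) * einv A (Psi A M a lam s)
        = ENNReal.ofReal (s ^ (-1-c)) * (ENNReal.ofReal s * einv A (Psi A M a lam s))
    rw [← mul_assoc, ← ENNReal.ofReal_mul (Real.rpow_nonneg hs.1.le _), hrpow s hs.1]
  -- the kernel function
  set K : ℝ → ℝ → ℝ≥0∞ := fun s τ => ENNReal.ofReal (s ^ (-1-c)) *
      (if ENNReal.ofReal τ < Φf s then 1 else 0) with hKdef
  have hKmeas : Measurable (Function.uncurry K) := by
    apply Measurable.mul
    · exact ENNReal.measurable_ofReal.comp (measurable_fst.pow measurable_const)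
    · exact Measurable.ite (measurableSet_lt (ENNReal.measurable_ofReal.comp measurable_snd)
        (hΦmeas.comp measurable_fst)) measurable_const measurable_const
  have hTmeas : ∀ s : ℝ, MeasurableSet {τ : ℝ | ENNReal.ofReal τ < Φf s} := fun s =>
    measurableSet_lt ENNReal.measurable_ofReal measurable_const
  have hKint : ∀ (s : ℝ) (S : Set ℝ), MeasurableSet S →
      (∫⁻ τ in S, K s τ)
      = ENNReal.ofReal (s ^ (-1-c)) * volume (S ∩ {τ | ENNReal.ofReal τ < Φf s}) := by
    intro s S hS
    rw [hKdef]
    simp only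
    rw [lintegral_const_mul' _ _ ENNReal.ofReal_ne_top]
    congr 1
    have hind : (fun τ => (if ENNReal.ofReal τ < Φf s then (1:ℝ≥0∞) else 0))
        = Set.indicator {τ | ENNReal.ofReal τ < Φf s} (fun _ => 1) := by
      ext τ
      simp [Set.indicator_apply, Set.mem_setOf_eq]
    rw [hind, lintegral_indicator (hTmeas s), setLIntegral_one,
      Measure.restrict_apply (hTmeas s), Set.inter_comm]
  constructor
  · -- (a) → (b)
    rintro ⟨δ, hδ, hI⟩
    rw [hintegrand δ] at hI
    refine ⟨1, one_pos, ?_⟩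
    have hpt : ∀ τ : ℝ, 0 < τ → (invE Φf τ) ^ (-c) ≤
        ENNReal.ofReal c * ∫⁻ s in Set.Ioi (0:ℝ), K s τ := by
      intro τ hτ
      rcases eq_or_ne (invE Φf τ) ⊤ with htop | htop
      · rw [htop, ENNReal.top_rpow_of_neg (by linarith)]
        exact zero_le
      rcases eq_or_ne (invE Φf τ) 0 with hzero | hzero
      · have hall : ∀ s : ℝ, 0 < s → ENNReal.ofReal τ < Φf s := by
          intro s hs
          apply lt_of_invE_lt hΦmono
          rw [hzero]
          exact ENNReal.ofReal_pos.2 hs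
        have heq : (∫⁻ s in Set.Ioi (0:ℝ), K s τ)
            = ∫⁻ s in Set.Ioi (0:ℝ), ENNReal.ofReal (s ^ (-1-c)) := by
          refine setLIntegral_congr_fun measurableSet_Ioi (fun s hs => ?_)
          rw [hKdef]
          simp only
          rw [if_pos (hall s hs), mul_one]
        rw [heq, lintegral_Ioi_zero_rpow_top hc, ENNReal.mul_top hcne]
        exact le_top
      set v : ℝ := (invE Φf τ).toReal with hvdef
      have hv0 : 0 < v := ENNReal.toReal_pos hzero htop
      have hev : ENNReal.ofReal v = invE Φf τ := ENNReal.ofReal_toReal htop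
      have hgt : ∀ s ∈ Set.Ioi v, ENNReal.ofReal τ < Φf s := by
        intro s hs
        apply lt_of_invE_lt hΦmono
        rw [← hev]
        exact (ENNReal.ofReal_lt_ofReal_iff (hv0.trans hs)).2 hs
      calc (invE Φf τ) ^ (-c) = ENNReal.ofReal (v ^ (-c)) := by
            rw [← hev, ENNReal.ofReal_rpow_of_pos hv0]
        _ = ENNReal.ofReal (c * (v ^ (-c) / c)) := by
            rw [mul_div_cancel₀ _ hc.ne']
        _ = ENNReal.ofReal c * ENNReal.ofReal (v ^ (-c) / c) := ENNReal.ofReal_mul hc.le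
        _ = ENNReal.ofReal c * ∫⁻ s in Set.Ioi v, ENNReal.ofReal (s ^ (-1-c)) := by
            rw [lintegral_Ioi_rpow_eval hc hv0]
        _ ≤ ENNReal.ofReal c * ∫⁻ s in Set.Ioi (0:ℝ), K s τ := by
            apply mul_le_mul_right
            have heq2 : (∫⁻ s in Set.Ioi v, ENNReal.ofReal (s ^ (-1-c)))
                = ∫⁻ s in Set.Ioi v, K s τ := by
              refine setLIntegral_congr_fun measurableSet_Ioi (fun s hs => ?_)
              rw [hKdef]
              simp only
              rw [if_pos (hgt s hs), mul_one]
            rw [heq2]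
            exact lintegral_mono_set (Set.Ioi_subset_Ioi hv0.le)
    have hswap : (∫⁻ τ in Set.Ioc (0:ℝ) 1, ∫⁻ s in Set.Ioi (0:ℝ), K s τ)
        = ∫⁻ s in Set.Ioi (0:ℝ), ∫⁻ τ in Set.Ioc (0:ℝ) 1, K s τ :=
      (lintegral_lintegral_swap hKmeas.aemeasurable).symm
    have hchain : (∫⁻ τ in Set.Ioc (0:ℝ) 1, (invE Φf τ) ^ (-c))
        ≤ ENNReal.ofReal c * ∫⁻ s in Set.Ioi (0:ℝ), ∫⁻ τ in Set.Ioc (0:ℝ) 1, K s τ := by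
      calc (∫⁻ τ in Set.Ioc (0:ℝ) 1, (invE Φf τ) ^ (-c))
          ≤ ∫⁻ τ in Set.Ioc (0:ℝ) 1, ENNReal.ofReal c * ∫⁻ s in Set.Ioi (0:ℝ), K s τ := by
            apply lintegral_mono_ae
            rw [ae_restrict_iff' measurableSet_Ioc]
            exact ae_of_all _ fun τ hτ => hpt τ hτ.1
        _ = ENNReal.ofReal c * ∫⁻ τ in Set.Ioc (0:ℝ) 1, ∫⁻ s in Set.Ioi (0:ℝ), K s τ :=
            lintegral_const_mul' _ _ ENNReal.ofReal_ne_top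
        _ = ENNReal.ofReal c * ∫⁻ s in Set.Ioi (0:ℝ), ∫⁻ τ in Set.Ioc (0:ℝ) 1, K s τ := by
            rw [hswap]
    have hsplit : (∫⁻ s in Set.Ioi (0:ℝ), ∫⁻ τ in Set.Ioc (0:ℝ) 1, K s τ)
        = (∫⁻ s in Set.Ioc (0:ℝ) δ, ∫⁻ τ in Set.Ioc (0:ℝ) 1, K s τ)
          + ∫⁻ s in Set.Ioi δ, ∫⁻ τ in Set.Ioc (0:ℝ) 1, K s τ := by
      rw [← lintegral_union measurableSet_Ioi
        (by simp [Set.disjoint_left, Set.mem_Ioc, Set.mem_Ioi]),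
        Set.Ioc_union_Ioi_eq_Ioi hδ.le]
    have hbound1 : (∫⁻ s in Set.Ioc (0:ℝ) δ, ∫⁻ τ in Set.Ioc (0:ℝ) 1, K s τ)
        ≤ ∫⁻ s in Set.Ioc (0:ℝ) δ, ENNReal.ofReal (s ^ (-1-c)) * Φf s := by
      apply lintegral_mono_ae
      rw [ae_restrict_iff' measurableSet_Ioc]
      refine ae_of_all _ fun s hs => ?_
      rw [hKint s _ measurableSet_Ioc]
      apply mul_le_mul_right
      refine le_trans (measure_mono ?_) (le_of_eq (layer_measure (Φf s)))
      rintro τ ⟨hτ1, hτ2⟩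
      exact ⟨hτ1.1, hτ2⟩
    have hbound2 : (∫⁻ s in Set.Ioi δ, ∫⁻ τ in Set.Ioc (0:ℝ) 1, K s τ)
        ≤ ENNReal.ofReal (δ ^ (-c) / c) := by
      have h5 : ∀ s ∈ Set.Ioi δ, (∫⁻ τ in Set.Ioc (0:ℝ) 1, K s τ)
          ≤ ENNReal.ofReal (s ^ (-1-c)) := by
        intro s hs
        rw [hKint s _ measurableSet_Ioc]
        calc ENNReal.ofReal (s ^ (-1-c)) * volume (Set.Ioc (0:ℝ) 1 ∩ {τ | ENNReal.ofReal τ < Φf s})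
            ≤ ENNReal.ofReal (s ^ (-1-c)) * volume (Set.Ioc (0:ℝ) 1) :=
              mul_le_mul_right (measure_mono Set.inter_subset_left) _
          _ = ENNReal.ofReal (s ^ (-1-c)) := by
              rw [Real.volume_Ioc]
              simp
      calc (∫⁻ s in Set.Ioi δ, ∫⁻ τ in Set.Ioc (0:ℝ) 1, K s τ)
          ≤ ∫⁻ s in Set.Ioi δ, ENNReal.ofReal (s ^ (-1-c)) := by
            apply lintegral_mono_ae
            rw [ae_restrict_iff' measurableSet_Ioi]
            exact ae_of_all _ h5
        _ = ENNReal.ofReal (δ ^ (-c) / c) := lintegral_Ioi_rpow_eval hc hδ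
    calc (∫⁻ τ in Set.Ioc (0:ℝ) 1, (invE Φf τ) ^ (-c))
        ≤ ENNReal.ofReal c * ((∫⁻ s in Set.Ioc (0:ℝ) δ, ENNReal.ofReal (s ^ (-1-c)) * Φf s)
            + ENNReal.ofReal (δ ^ (-c) / c)) := by
          refine hchain.trans (mul_le_mul_right ?_ _)
          rw [hsplit]
          exact add_le_add hbound1 hbound2
      _ < ⊤ := by
          apply ENNReal.mul_lt_top ENNReal.ofReal_lt_top
          exact ENNReal.add_lt_top.2 ⟨hI, ENNReal.ofReal_lt_top⟩
  · -- (b) → (a)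
    rintro ⟨δ', hδ', hJ⟩
    have hpos : ∀ τ ∈ Set.Ioc (0:ℝ) δ', 0 < invE Φf τ := by
      intro τ hτ
      rcases eq_or_ne (invE Φf τ) 0 with h0 | h0
      · exfalso
        have hsub : ∀ x ∈ Set.Ioc (0:ℝ) τ, (invE Φf x) ^ (-c) = (⊤:ℝ≥0∞) := by
          intro x hx
          have hle : invE Φf x ≤ invE Φf τ := invE_mono _ hx.2
          have hx0 : invE Φf x = 0 := le_antisymm (h0 ▸ hle) zero_le
          rw [hx0, ENNReal.zero_rpow_of_neg (by linarith)]
        have htop2 : (∫⁻ x in Set.Ioc (0:ℝ) τ, (invE Φf x) ^ (-c)) = ⊤ := by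
          rw [setLIntegral_congr_fun measurableSet_Ioc hsub, setLIntegral_const,
            Real.volume_Ioc, ENNReal.top_mul]
          simp [hτ.1]
        have hmono2 : (∫⁻ x in Set.Ioc (0:ℝ) τ, (invE Φf x) ^ (-c))
            ≤ ∫⁻ x in Set.Ioc (0:ℝ) δ', (invE Φf x) ^ (-c) :=
          lintegral_mono_set (Set.Ioc_subset_Ioc_right hτ.2)
        rw [htop2, top_le_iff] at hmono2
        rw [hmono2] at hJ
        exact absurd hJ (lt_irrefl _)
      · exact pos_iff_ne_zero.2 h0
    have hhalf : δ'/2 ∈ Set.Ioc (0:ℝ) δ' := ⟨by linarith, by linarith⟩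
    obtain ⟨δ, hδr, hd1, hdlt⟩ :
        ∃ r : ℝ, 0 ≤ r ∧ (0:ℝ≥0∞) < ENNReal.ofReal r ∧ ENNReal.ofReal r < invE Φf (δ'/2) :=
      ENNReal.lt_iff_exists_real_btwn.1 (hpos _ hhalf)
    have hδ : 0 < δ := ENNReal.ofReal_pos.1 hd1
    have hsmall : ∀ s ∈ Set.Ioc (0:ℝ) δ, Φf s ≤ ENNReal.ofReal (δ'/2) := by
      intro s hs
      by_contra hcon
      push_neg at hcon
      have h6 : invE Φf (δ'/2) ≤ ENNReal.ofReal s := invE_le hs.1 hcon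
      have h7 : invE Φf (δ'/2) ≤ ENNReal.ofReal δ :=
        h6.trans (ENNReal.ofReal_le_ofReal hs.2)
      exact absurd h7 (not_le.2 hdlt)
    refine ⟨δ, hδ, ?_⟩
    rw [hintegrand δ]
    have h1 : (∫⁻ s in Set.Ioc (0:ℝ) δ, ENNReal.ofReal (s ^ (-1-c)) * Φf s)
        = ∫⁻ s in Set.Ioc (0:ℝ) δ, ∫⁻ τ in Set.Ioi (0:ℝ), K s τ := by
      refine setLIntegral_congr_fun measurableSet_Ioc (fun s hs => ?_)
      rw [hKint s _ measurableSet_Ioi]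
      congr 1
      rw [show Set.Ioi (0:ℝ) ∩ {τ | ENNReal.ofReal τ < Φf s}
          = {τ | 0 < τ ∧ ENNReal.ofReal τ < Φf s} from by
        ext τ; simp [Set.mem_Ioi, Set.mem_setOf_eq]]
      exact (layer_measure (Φf s)).symm
    have hswap : (∫⁻ s in Set.Ioc (0:ℝ) δ, ∫⁻ τ in Set.Ioi (0:ℝ), K s τ)
        = ∫⁻ τ in Set.Ioi (0:ℝ), ∫⁻ s in Set.Ioc (0:ℝ) δ, K s τ :=
      lintegral_lintegral_swap hKmeas.aemeasurable
    have h3 : ∀ τ : ℝ, 0 < τ → (∫⁻ s in Set.Ioc (0:ℝ) δ, K s τ)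
        ≤ ENNReal.ofReal (1/c) *
          Set.indicator (Set.Ioc (0:ℝ) δ') (fun τ => (invE Φf τ) ^ (-c)) τ := by
      intro τ hτ
      by_cases hex : ∃ s ∈ Set.Ioc (0:ℝ) δ, ENNReal.ofReal τ < Φf s
      · obtain ⟨s₀, hs₀, hΦs₀⟩ := hex
        have hτδ' : τ < δ'/2 := by
          have h4 : ENNReal.ofReal τ < ENNReal.ofReal (δ'/2) := hΦs₀.trans_le (hsmall s₀ hs₀)
          exact (ENNReal.ofReal_lt_ofReal_iff_of_nonneg hτ.le).1 h4
        have hτIoc : τ ∈ Set.Ioc (0:ℝ) δ' := ⟨hτ, by linarith⟩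
        have hpos' : 0 < invE Φf τ := hpos τ hτIoc
        have hle : invE Φf τ ≤ ENNReal.ofReal s₀ := invE_le hs₀.1 hΦs₀
        have hfin : invE Φf τ ≠ ⊤ := (hle.trans_lt ENNReal.ofReal_lt_top).ne
        set v : ℝ := (invE Φf τ).toReal with hvdef
        have hv0 : 0 < v := ENNReal.toReal_pos hpos'.ne' hfin
        have hev : ENNReal.ofReal v = invE Φf τ := ENNReal.ofReal_toReal hfin
        have hptw : ∀ s ∈ Set.Ioc (0:ℝ) δ, K s τ
            ≤ (Set.Ici v).indicator (fun s => ENNReal.ofReal (s ^ (-1-c))) s := by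
          intro s hs
          rw [hKdef]
          simp only
          by_cases hlt : ENNReal.ofReal τ < Φf s
          · rw [if_pos hlt, mul_one]
            have hvs : v ≤ s := by
              have h8 : invE Φf τ ≤ ENNReal.ofReal s := invE_le hs.1 hlt
              rw [← hev] at h8
              exact (ENNReal.ofReal_le_ofReal_iff hs.1.le).1 h8
            rw [Set.indicator_of_mem (Set.mem_Ici.2 hvs)]
          · rw [if_neg hlt, mul_zero]
            exact zero_le
        calc (∫⁻ s in Set.Ioc (0:ℝ) δ, K s τ)
            ≤ ∫⁻ s in Set.Ioc (0:ℝ) δ,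
                (Set.Ici v).indicator (fun s => ENNReal.ofReal (s ^ (-1-c))) s := by
              apply lintegral_mono_ae
              rw [ae_restrict_iff' measurableSet_Ioc]
              exact ae_of_all _ hptw
          _ ≤ ∫⁻ s, (Set.Ici v).indicator (fun s => ENNReal.ofReal (s ^ (-1-c))) s :=
              setLIntegral_le_lintegral _ _
          _ = ∫⁻ s in Set.Ici v, ENNReal.ofReal (s ^ (-1-c)) :=
              lintegral_indicator measurableSet_Ici _
          _ = ∫⁻ s in Set.Ioi v, ENNReal.ofReal (s ^ (-1-c)) :=
              (setLIntegral_congr Ioi_ae_eq_Ici).symm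
          _ = ENNReal.ofReal (v ^ (-c) / c) := lintegral_Ioi_rpow_eval hc hv0
          _ = ENNReal.ofReal (1/c) * (invE Φf τ) ^ (-c) := by
              rw [← hev, ENNReal.ofReal_rpow_of_pos hv0,
                ← ENNReal.ofReal_mul (by positivity : (0:ℝ) ≤ 1/c)]
              congr 1
              field_simp
          _ = ENNReal.ofReal (1/c) *
              Set.indicator (Set.Ioc (0:ℝ) δ') (fun τ => (invE Φf τ) ^ (-c)) τ := by
              rw [Set.indicator_of_mem hτIoc]
      · push_neg at hex
        have hz : ∀ s ∈ Set.Ioc (0:ℝ) δ, K s τ = 0 := by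
          intro s hs
          rw [hKdef]
          simp only
          rw [if_neg (not_lt.2 (hex s hs)), mul_zero]
        rw [setLIntegral_congr_fun measurableSet_Ioc hz]
        simp
    calc (∫⁻ s in Set.Ioc (0:ℝ) δ, ENNReal.ofReal (s ^ (-1-c)) * Φf s)
        = ∫⁻ τ in Set.Ioi (0:ℝ), ∫⁻ s in Set.Ioc (0:ℝ) δ, K s τ := by rw [h1, hswap]
      _ ≤ ∫⁻ τ in Set.Ioi (0:ℝ), ENNReal.ofReal (1/c) *
            Set.indicator (Set.Ioc (0:ℝ) δ') (fun τ => (invE Φf τ) ^ (-c)) τ := by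
          apply lintegral_mono_ae
          rw [ae_restrict_iff' measurableSet_Ioi]
          exact ae_of_all _ fun τ hτ => h3 τ hτ
      _ = ENNReal.ofReal (1/c) * ∫⁻ τ in Set.Ioi (0:ℝ),
            Set.indicator (Set.Ioc (0:ℝ) δ') (fun τ => (invE Φf τ) ^ (-c)) τ :=
          lintegral_const_mul' _ _ ENNReal.ofReal_ne_top
      _ = ENNReal.ofReal (1/c) * ∫⁻ τ in Set.Ioc (0:ℝ) δ', (invE Φf τ) ^ (-c) := by
          congr 1
          rw [lintegral_indicator measurableSet_Ioc, Measure.restrict_restrict measurableSet_Ioc]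
          congr 1
          rw [Set.inter_eq_left.2 (fun x hx => hx.1)]
      _ < ⊤ := ENNReal.mul_lt_top ENNReal.ofReal_lt_top hJ
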